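/- (VP score rescaling) Let μ₀ ∈ ℝ^d, let Σ₀ be a symmetric positive definite d×d real matrix, let a ∈ (0, 1) (representing α(t)), and let β > 0. Define p(x) = N(x; a μ₀, a² Σ₀ + (1 - a²) I) and p^{(β)}(x) = N(x; a μ₀, (a²/β) Σ₀ + (1 - a²) I). Then for every x ∈ ℝ^d, ∇_x log p^{(β)}(x) = R^{VP} ∇_x log p(x), where R^{VP} = ((1 - a²) I + (a²/β) Σ₀)⁻¹ ((1 - a²) I + a² Σ₀). -/

import Mathlib

open scoped RealInnerProductSpace Matrix

/-- The multivariate Gaussian density `N(x; μ, S)` on `ℝ^d`. -/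
noncomputable def gaussianDensity {d : ℕ} (μ : EuclideanSpace ℝ (Fin d))
    (S : Matrix (Fin d) (Fin d) ℝ) (x : EuclideanSpace ℝ (Fin d)) : ℝ :=
  (2 * Real.pi) ^ (-(d : ℝ) / 2) * S.det ^ (-(1 : ℝ) / 2) *
    Real.exp (-(1 / 2 : ℝ) * ⟪x - μ, (Matrix.toEuclideanLin S⁻¹) (x - μ)⟫)

lemma posDef_smul {d : ℕ} {A : Matrix (Fin d) (Fin d) ℝ} (hA : A.PosDef) {c : ℝ}
    (hc : 0 < c) : (c • A).PosDef := by
  refine Matrix.PosDef.of_dotProduct_mulVec_pos ?_ (fun x hx => ?_)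
  · simp only [Matrix.IsHermitian, Matrix.conjTranspose_smul, star_trivial, hA.1.eq]
  rw [Matrix.smul_mulVec, dotProduct_smul]
  exact smul_pos hc (hA.dotProduct_mulVec_pos hx)

lemma toEuclideanLin_mul_apply {d : ℕ} (M N : Matrix (Fin d) (Fin d) ℝ)
    (v : EuclideanSpace ℝ (Fin d)) :
    Matrix.toEuclideanLin (M * N) v = Matrix.toEuclideanLin M (Matrix.toEuclideanLin N v) := by
  simp [Matrix.toEuclideanLin_apply, Matrix.mulVec_mulVec]

lemma gradient_log_gaussian {d : ℕ} (μ : EuclideanSpace ℝ (Fin d))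
    (S : Matrix (Fin d) (Fin d) ℝ) (hS : S.PosDef) (x : EuclideanSpace ℝ (Fin d)) :
    gradient (fun y => Real.log (gaussianDensity μ S y)) x
      = -(Matrix.toEuclideanLin S⁻¹ (x - μ)) := by
  set L : EuclideanSpace ℝ (Fin d) →ₗ[ℝ] EuclideanSpace ℝ (Fin d) :=
    Matrix.toEuclideanLin S⁻¹ with hL
  set Lc : EuclideanSpace ℝ (Fin d) →L[ℝ] EuclideanSpace ℝ (Fin d) :=
    LinearMap.toContinuousLinearMap L with hLc
  have hc : (0:ℝ) < (2 * Real.pi) ^ (-(d : ℝ) / 2) * S.det ^ (-(1 : ℝ) / 2) :=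
    mul_pos (Real.rpow_pos_of_pos (by positivity) _) (Real.rpow_pos_of_pos hS.det_pos _)
  have hfun : (fun y => Real.log (gaussianDensity μ S y)) =
      fun y => Real.log ((2 * Real.pi) ^ (-(d : ℝ) / 2) * S.det ^ (-(1 : ℝ) / 2)) +
        (-(1 / 2 : ℝ)) * ⟪y - μ, Lc (y - μ)⟫ := by
    funext y
    rw [gaussianDensity, Real.log_mul (ne_of_gt hc) (Real.exp_ne_zero _), Real.log_exp]
    simp [hLc, hL]
  -- self-adjointness of L
  have hsa : ∀ u v : EuclideanSpace ℝ (Fin d), ⟪u, Lc v⟫ = ⟪Lc u, v⟫ := by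
    intro u v
    have hherm : (S⁻¹).IsHermitian := hS.inv.isHermitian
    have : Matrix.toEuclideanLin ((S⁻¹)ᴴ) = LinearMap.adjoint (Matrix.toEuclideanLin S⁻¹) :=
      Matrix.toEuclideanLin_conjTranspose_eq_adjoint S⁻¹
    rw [hherm.eq] at this
    calc ⟪u, Lc v⟫ = ⟪(LinearMap.adjoint L) u, v⟫ := by
          rw [LinearMap.adjoint_inner_left]; rfl
      _ = ⟪Lc u, v⟫ := by rw [hL, ← this]; rfl
  -- the Fréchet derivative
  have hsub : HasFDerivAt (fun y : EuclideanSpace ℝ (Fin d) => y - μ)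
      (ContinuousLinearMap.id ℝ (EuclideanSpace ℝ (Fin d))) x := (hasFDerivAt_id x).sub_const μ
  have hLsub : HasFDerivAt (fun y : EuclideanSpace ℝ (Fin d) => Lc (y - μ))
      Lc x := by
    have := Lc.hasFDerivAt.comp x hsub
    simpa [Function.comp_def] using this
  have hq : HasFDerivAt (fun y : EuclideanSpace ℝ (Fin d) => ⟪y - μ, Lc (y - μ)⟫)
      ((fderivInnerCLM ℝ (x - μ, Lc (x - μ))).comp
        ((ContinuousLinearMap.id ℝ (EuclideanSpace ℝ (Fin d))).prod Lc)) x :=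
    hsub.inner ℝ hLsub
  have hf : HasFDerivAt (fun y => Real.log (gaussianDensity μ S y))
      ((-(1 / 2 : ℝ)) • ((fderivInnerCLM ℝ (x - μ, Lc (x - μ))).comp
        ((ContinuousLinearMap.id ℝ (EuclideanSpace ℝ (Fin d))).prod Lc))) x := by
    rw [hfun]
    exact (hq.const_mul (-(1 / 2 : ℝ))).const_add _
  have hg := (hasFDerivAt_iff_hasGradientAt).mp hf
  rw [hg.gradient]
  apply (InnerProductSpace.toDual ℝ (EuclideanSpace ℝ (Fin d))).injective
  rw [LinearIsometryEquiv.apply_symm_apply]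
  ext h
  rw [InnerProductSpace.toDual_apply_apply]
  simp only [ContinuousLinearMap.coe_smul', Pi.smul_apply, ContinuousLinearMap.coe_comp',
    Function.comp_apply, ContinuousLinearMap.prod_apply, ContinuousLinearMap.coe_id', id_eq,
    fderivInnerCLM_apply]
  have h1 : ⟪x - μ, Lc h⟫ = ⟪Lc (x - μ), h⟫ := hsa _ _
  have h2 : (⟪h, Lc (x - μ)⟫ : ℝ) = ⟪Lc (x - μ), h⟫ := real_inner_comm _ _
  have h3 : (⟪-(Matrix.toEuclideanLin S⁻¹ (x - μ)), h⟫ : ℝ) = -⟪Lc (x - μ), h⟫ := by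
    rw [inner_neg_left]; rfl
  rw [h3, h1, h2, smul_eq_mul]
  ring

/-- VP score rescaling: with `p = N(a μ₀, a² Σ₀ + (1 - a²) I)` and
`p^{(β)} = N(a μ₀, (a²/β) Σ₀ + (1 - a²) I)`, for every `x`
`∇ log p^{(β)}(x) = R^{VP} ∇ log p(x)` where
`R^{VP} = ((1 - a²) I + (a²/β) Σ₀)⁻¹ ((1 - a²) I + a² Σ₀)`. -/
theorem vp_score_rescaling {d : ℕ} (μ₀ : EuclideanSpace ℝ (Fin d))
    (S₀ : Matrix (Fin d) (Fin d) ℝ) (hS₀ : S₀.PosDef)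
    (a : ℝ) (ha : a ∈ Set.Ioo (0 : ℝ) 1) (β : ℝ) (hβ : 0 < β) :
    ∀ x : EuclideanSpace ℝ (Fin d),
      gradient (fun y =>
          Real.log (gaussianDensity (a • μ₀)
            ((a ^ 2 / β) • S₀ + (1 - a ^ 2) • (1 : Matrix (Fin d) (Fin d) ℝ)) y)) x
        = (Matrix.toEuclideanLin
            (((1 - a ^ 2) • (1 : Matrix (Fin d) (Fin d) ℝ) + (a ^ 2 / β) • S₀)⁻¹ *
              ((1 - a ^ 2) • (1 : Matrix (Fin d) (Fin d) ℝ) + a ^ 2 • S₀)))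
            (gradient (fun y =>
              Real.log (gaussianDensity (a • μ₀)
                (a ^ 2 • S₀ + (1 - a ^ 2) • (1 : Matrix (Fin d) (Fin d) ℝ)) y)) x) := by
  obtain ⟨ha0, ha1⟩ := ha
  have ha2 : (0:ℝ) < a ^ 2 := by positivity
  have h1a : (0:ℝ) < 1 - a ^ 2 := by nlinarith
  have hone : ((1 - a ^ 2) • (1 : Matrix (Fin d) (Fin d) ℝ)).PosDef :=
    posDef_smul Matrix.PosDef.one h1a
  have hSβ : ((a ^ 2 / β) • S₀ + (1 - a ^ 2) • (1 : Matrix (Fin d) (Fin d) ℝ)).PosDef :=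
    (posDef_smul hS₀ (by positivity)).add hone
  have hSp : (a ^ 2 • S₀ + (1 - a ^ 2) • (1 : Matrix (Fin d) (Fin d) ℝ)).PosDef :=
    (posDef_smul hS₀ ha2).add hone
  intro x
  rw [gradient_log_gaussian _ _ hSβ, gradient_log_gaussian _ _ hSp]
  rw [map_neg, ← toEuclideanLin_mul_apply]
  congr 2
  have hcomm1 : (1 - a ^ 2) • (1 : Matrix (Fin d) (Fin d) ℝ) + (a ^ 2 / β) • S₀
      = (a ^ 2 / β) • S₀ + (1 - a ^ 2) • (1 : Matrix (Fin d) (Fin d) ℝ) := add_comm _ _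
  have hcomm2 : (1 - a ^ 2) • (1 : Matrix (Fin d) (Fin d) ℝ) + a ^ 2 • S₀
      = a ^ 2 • S₀ + (1 - a ^ 2) • (1 : Matrix (Fin d) (Fin d) ℝ) := add_comm _ _
  rw [hcomm1, hcomm2, mul_assoc,
    Matrix.mul_nonsing_inv _ (isUnit_iff_ne_zero.mpr hSp.det_pos.ne'), mul_one]
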